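/- Let a be the monomial ideal of R with exponent set A and J the monomial ideal with exponent set B, with a ⊆ √J. For every e ≥ 1 there exists u ∈ σ^∨ \ Q(B) such that ν_a^J(p^e)/p^e ≤ λ_A(u). -/

import Mathlib

open Finset Filter Pointwise

noncomputable section

namespace Paper

variable {d n : ℕ}

/-- The standard inner product pairing on `ℝ^d`. -/
def pair (u w : Fin d → ℝ) : ℝ := ∑ i, u i * w i

/-- The coercion `ℤ^d → ℝ^d`. -/
def toR (u : Fin d → ℤ) : Fin d → ℝ := fun i => (u i : ℝ)

/-- The cone generated by the integer vectors `v 1, …, v n`. -/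
def cone (v : Fin n → Fin d → ℤ) : Set (Fin d → ℝ) :=
  {x | ∃ c : Fin n → ℝ, (∀ j, 0 ≤ c j) ∧ x = ∑ j, c j • toR (v j)}

/-- The dual cone `σ^∨ = {u | ⟨u, x⟩ ≥ 0 for all x ∈ σ}`. -/
def dualCone (v : Fin n → Fin d → ℤ) : Set (Fin d → ℝ) :=
  {u | ∀ x ∈ cone v, 0 ≤ pair u x}

/-- Strong convexity of the cone generated by `v`. -/
def StronglyConvex (v : Fin n → Fin d → ℤ) : Prop :=
  ∀ x ∈ cone v, -x ∈ cone v → x = 0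

/-- An integer vector is primitive if the gcd of its coordinates is 1. -/
def IsPrimitive (w : Fin d → ℤ) : Prop := Finset.univ.gcd w = 1

/-- The cone generated by `v` is `d`-dimensional. -/
def FullDim (v : Fin n → Fin d → ℤ) : Prop :=
  Submodule.span ℝ (Set.range fun j => toR (v j)) = ⊤

/-- The Newton polyhedron `P(A) = conv(A) + σ^∨`. -/
def newton (v : Fin n → Fin d → ℤ) (A : Finset (Fin d → ℤ)) : Set (Fin d → ℝ) :=
  convexHull ℝ (toR '' ↑A) + dualCone v

/-- The set `Q(A) = ⋃_{a ∈ A} (a + σ^∨)`. -/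
def QSet (v : Fin n → Fin d → ℤ) (A : Finset (Fin d → ℤ)) : Set (Fin d → ℝ) :=
  ⋃ a ∈ A, (toR a +ᵥ dualCone v)

/-- `λ_A(u) = sup {λ > 0 | u ∈ λ·P(A)}` (and `0` if no such `λ` exists;
note `Real.sSup` of the empty set is `0`). -/
def lam (v : Fin n → Fin d → ℤ) (A : Finset (Fin d → ℤ)) (u : Fin d → ℝ) : ℝ :=
  sSup {l : ℝ | 0 < l ∧ u ∈ l • newton v A}

/-- `Q(m)` for the maximal monomial ideal, whose exponent set is
`(σ^∨ ∩ ℤ^d) \ {0}`. -/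
def Qm (v : Fin n → Fin d → ℤ) : Set (Fin d → ℝ) :=
  ⋃ a ∈ {a : Fin d → ℤ | toR a ∈ dualCone v ∧ a ≠ 0}, (toR a +ᵥ dualCone v)

/-- The set `O = {u ∈ σ^∨ | ⟨u, v_j⟩ ≥ 1 for some j}`. -/
def OSet (v : Fin n → Fin d → ℤ) : Set (Fin d → ℝ) :=
  {u ∈ dualCone v | ∃ j, 1 ≤ pair u (toR (v j))}

/-- The additive submonoid `σ^∨ ∩ ℤ^d` of `ℤ^d`. -/
def latt (v : Fin n → Fin d → ℤ) : AddSubmonoid (Fin d → ℤ) where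
  carrier := {u | toR u ∈ dualCone v}
  zero_mem' := by
    intro x hx
    simp [pair, toR]
  add_mem' := by
    intro a b ha hb x hx
    have h : pair (toR (a + b)) x = pair (toR a) x + pair (toR b) x := by
      simp [pair, toR, add_mul, Finset.sum_add_distrib]
    have h2 := add_nonneg (ha x hx) (hb x hx)
    rw [h]
    exact h2

/-- The toric ring `R = k[σ^∨ ∩ ℤ^d]`, as the monoid algebra of the
additive monoid `σ^∨ ∩ ℤ^d` over `k`. -/
abbrev Toric (k : Type) [Field k] (v : Fin n → Fin d → ℤ) : Type :=
  AddMonoidAlgebra k (latt v)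

/-- The monomial ideal of `R` with exponent set `A`: the ideal generated by
the monomials `X^a`, `a ∈ A`. -/
def monIdeal (k : Type) [Field k] (v : Fin n → Fin d → ℤ) (A : Finset (Fin d → ℤ)) :
    Ideal (Toric k v) :=
  Ideal.span {x | ∃ a : latt v, (a : Fin d → ℤ) ∈ A ∧ x = AddMonoidAlgebra.single a 1}

/-- The maximal monomial ideal of `R`, generated by all monomials `X^u`
with `u ∈ (σ^∨ ∩ ℤ^d) \ {0}`. -/
def maxMonIdeal (k : Type) [Field k] (v : Fin n → Fin d → ℤ) : Ideal (Toric k v) :=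
  Ideal.span {x | ∃ a : latt v, a ≠ 0 ∧ x = AddMonoidAlgebra.single a 1}

/-- The bracket power `J^{[q]}`: the ideal generated by the `q`-th powers of
elements of `J`. -/
def bracket {S : Type*} [CommRing S] (J : Ideal S) (q : ℕ) : Ideal S :=
  Ideal.span ((fun x => x ^ q) '' (J : Set S))

/-- `ν_a^J(q) = max {r ∈ ℕ | a^r ⊄ J^{[q]}}`. -/
def nuF {S : Type*} [CommRing S] (a J : Ideal S) (q : ℕ) : ℕ :=
  sSup {r : ℕ | ¬ a ^ r ≤ bracket J q}


-- AUX LEMMAS (to be inserted before nu_le_lam)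
section Aux

variable {k : Type} [Field k] {v : Fin n → Fin d → ℤ}

lemma pair_add_left (u u' x : Fin d → ℝ) : pair (u + u') x = pair u x + pair u' x := by
  simp [pair, add_mul, Finset.sum_add_distrib]

lemma pair_smul_left (r : ℝ) (u x : Fin d → ℝ) : pair (r • u) x = r * pair u x := by
  simp [pair, Finset.mul_sum, mul_assoc]

lemma pair_neg_left (u x : Fin d → ℝ) : pair (-u) x = -pair u x := by
  simp [pair, Finset.sum_neg_distrib]

lemma pair_sum_right {ι : Type*} (s : Finset ι) (u : Fin d → ℝ) (w : ι → Fin d → ℝ) :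
    pair u (∑ i ∈ s, w i) = ∑ i ∈ s, pair u (w i) := by
  unfold pair
  rw [Finset.sum_comm]
  congr 1
  ext i
  simp [Finset.mul_sum]

lemma pair_smul_right (r : ℝ) (u x : Fin d → ℝ) : pair u (r • x) = r * pair u x := by
  simp [pair, Finset.mul_sum]; ring_nf; simp [mul_comm, mul_assoc, mul_left_comm]

lemma dualCone_smul {r : ℝ} (hr : 0 ≤ r) {u : Fin d → ℝ} (hu : u ∈ dualCone v) :
    r • u ∈ dualCone v := by
  intro x hx
  rw [pair_smul_left]
  exact mul_nonneg hr (hu x hx)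

lemma toR_add (a b : Fin d → ℤ) : toR (a + b) = toR a + toR b := by
  funext i; simp [toR]

lemma toR_sub (a b : Fin d → ℤ) : toR (a - b) = toR a - toR b := by
  funext i; simp [toR]

lemma toR_nsmul (q : ℕ) (a : Fin d → ℤ) : toR (q • a) = (q : ℝ) • toR a := by
  funext i; simp [toR]

lemma toR_neg (a : Fin d → ℤ) : toR (-a) = -toR a := by
  funext i; simp [toR]

lemma toR_sum {ι : Type*} (s : Finset ι) (g : ι → Fin d → ℤ) :
    toR (∑ i ∈ s, g i) = ∑ i ∈ s, toR (g i) := by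
  funext i
  simp [toR, Finset.sum_apply]

/-- Membership of generator cone elements. -/
lemma gen_mem_cone (v : Fin n → Fin d → ℤ) (j : Fin n) : toR (v j) ∈ cone v := by
  refine ⟨fun i => if i = j then 1 else 0, fun i => by positivity, ?_⟩
  simp [Finset.sum_ite_eq']

lemma sum_gen_mem_cone (v : Fin n → Fin d → ℤ) : (∑ j, toR (v j)) ∈ cone v := by
  refine ⟨fun _ => 1, fun _ => zero_le_one, by simp⟩

end Aux
section Aux2

variable {k : Type} [Field k] {v : Fin n → Fin d → ℤ}

/-- Coefficient/support lemma for monomial ideals: the support of any element of the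
ideal generated by monomials with exponents in `T` consists of exponents of the
form `m + s` with `s ∈ T`. -/
lemma support_subset_of_mem_span {T : Set (latt v)} {f : Toric k v}
    (hf : f ∈ Ideal.span {x : Toric k v | ∃ s ∈ T, x = AddMonoidAlgebra.single s 1})
    {c : latt v} (hc : c ∈ f.coeff.support) : ∃ s ∈ T, ∃ m : latt v, c = m + s := by
  classical
  induction hf using Submodule.span_induction generalizing c with
  | mem x hx =>
    obtain ⟨s, hs, rfl⟩ := hx
    have := Finsupp.support_single_subset hc
    simp only [Finset.mem_singleton] at this
    exact ⟨s, hs, 0, by rw [this, zero_add]⟩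
  | zero => simp at hc
  | add x y hx hy ihx ihy =>
    have := Finsupp.support_add (by simpa using hc)
    rcases Finset.mem_union.mp this with h | h
    · exact ihx h
    · exact ihy h
  | smul a x hx ih =>
    have hmul : (a • x : Toric k v) = a * x := rfl
    rw [hmul] at hc
    have := AddMonoidAlgebra.support_coeff_mul_subset a x hc
    obtain ⟨m', hm', c', hc', rfl⟩ := Finset.mem_add.mp this
    obtain ⟨s, hs, m, hm⟩ := ih hc'
    exact ⟨s, hs, m' + m, by rw [hm, add_assoc]⟩

/-- Easy direction: a monomial whose exponent is `m + s`, `s ∈ T`, lies in the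
monomial ideal. -/
lemma single_mem_span {T : Set (latt v)} {s : latt v} (hs : s ∈ T) (m : latt v) :
    (AddMonoidAlgebra.single (m + s) 1 : Toric k v) ∈
      Ideal.span {x : Toric k v | ∃ t ∈ T, x = AddMonoidAlgebra.single t 1} := by
  have h : (AddMonoidAlgebra.single (m + s) 1 : Toric k v) =
      AddMonoidAlgebra.single m 1 * AddMonoidAlgebra.single s 1 := by
    rw [AddMonoidAlgebra.single_mul_single, one_mul]
  rw [h]
  exact Ideal.mul_mem_left _ _ (Ideal.subset_span ⟨s, hs, rfl⟩)

/-- If every monomial of `f` lies in `I`, then `f ∈ I`. -/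
lemma mem_of_forall_single_mem {I : Ideal (Toric k v)} {f : Toric k v}
    (h : ∀ c ∈ f.coeff.support, (AddMonoidAlgebra.single c 1 : Toric k v) ∈ I) : f ∈ I := by
  classical
  have hf : f = ∑ c ∈ f.coeff.support, AddMonoidAlgebra.single c (f.coeff c) := by
    conv_lhs => rw [← AddMonoidAlgebra.sum_coeff_single f]
    rfl
  rw [hf]
  refine Ideal.sum_mem _ fun c hc => ?_
  have : (AddMonoidAlgebra.single c (f.coeff c) : Toric k v) =
      AddMonoidAlgebra.single 0 (f.coeff c) * AddMonoidAlgebra.single c 1 := by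
    rw [AddMonoidAlgebra.single_mul_single, zero_add, mul_one]
  rw [this]
  exact Ideal.mul_mem_left _ _ (h c hc)

/-- A product of monomials `X^{g i}` is the monomial of the sum. -/
lemma prod_single_one {ι : Type*} (s : Finset ι) (g : ι → latt v) :
    (∏ i ∈ s, (AddMonoidAlgebra.single (g i) 1 : Toric k v)) =
      AddMonoidAlgebra.single (∑ i ∈ s, g i) 1 := by
  classical
  induction s using Finset.cons_induction with
  | empty => simp [AddMonoidAlgebra.one_def]
  | cons a s ha ih =>
    rw [Finset.prod_cons, Finset.sum_cons, ih, AddMonoidAlgebra.single_mul_single, one_mul]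

/-- `span S ^ ν = span (S ^ ν)`. -/
lemma span_pow_eq (S : Set (Toric k v)) (ν : ℕ) : Ideal.span S ^ ν = Ideal.span (S ^ ν) := by
  induction ν with
  | zero => simp [Ideal.one_eq_top, Ideal.span_singleton_one]
  | succ ν ih => rw [pow_succ, ih, Ideal.span_mul_span', pow_succ]

/-- In characteristic `p`, the bracket power of a span is the span of the powers
of the generators. -/
lemma bracket_span (p e : ℕ) [Fact p.Prime] [CharP (Toric k v) p] (S : Set (Toric k v)) :
    bracket (Ideal.span S) (p ^ e) = Ideal.span ((fun x => x ^ (p ^ e)) '' S) := by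
  apply le_antisymm
  · rw [bracket, Ideal.span_le]
    rintro _ ⟨x, hx, rfl⟩
    simp only [SetLike.mem_coe] at hx ⊢
    induction hx using Submodule.span_induction with
    | mem y hy => exact Ideal.subset_span ⟨y, hy, rfl⟩
    | zero =>
      rw [zero_pow (pow_ne_zero e (Fact.out : Nat.Prime p).ne_zero)]
      exact Ideal.zero_mem _
    | add y z hy hz ihy ihz =>
      rw [add_pow_char_pow]
      exact Ideal.add_mem _ ihy ihz
    | smul a y hy ih =>
      have : (a • y) ^ (p ^ e) = a ^ (p ^ e) * y ^ (p ^ e) := by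
        rw [smul_eq_mul, mul_pow]
      rw [this]
      exact Ideal.mul_mem_left _ _ ih
  · rw [Ideal.span_le]
    rintro _ ⟨x, hx, rfl⟩
    exact Ideal.subset_span ⟨x, Ideal.subset_span hx, rfl⟩

end Aux2
/-- for every `e ≥ 1` there exists `u ∈ σ^∨ \ Q(B)` with
`ν_a^J(p^e)/p^e ≤ λ_A(u)`. -/
theorem nu_le_lam
    (d n p : ℕ) (hd : 1 ≤ d) (hp : p.Prime)
    (k : Type) [Field k] [CharP k p] [ExpChar k p] [PerfectRing k p]
    (v : Fin n → Fin d → ℤ)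
    (hsc : StronglyConvex v) (hprim : ∀ j, IsPrimitive (v j))
    (A B : Finset (Fin d → ℤ))
    (hAne : A.Nonempty) (hBne : B.Nonempty)
    (hAl : ∀ a ∈ A, toR a ∈ dualCone v) (hBl : ∀ b ∈ B, toR b ∈ dualCone v)
    (ha0 : monIdeal k v A ≠ ⊥) (haP : monIdeal k v A ≠ ⊤)
    (hJ0 : monIdeal k v B ≠ ⊥) (hJP : monIdeal k v B ≠ ⊤)
    (hrad : monIdeal k v A ≤ (monIdeal k v B).radical) :
    ∀ e : ℕ, 1 ≤ e →
      ∃ u ∈ dualCone v \ QSet v B,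
        (nuF (monIdeal k v A) (monIdeal k v B) (p ^ e) : ℝ) / (p ^ e : ℝ) ≤ lam v A u := by
  intro e he
  classical
  haveI : Fact p.Prime := ⟨hp⟩
  haveI : CharP (Toric k v) p := by
    refine charP_of_injective_ringHom
      (f := (AddMonoidAlgebra.singleZeroRingHom : k →+* AddMonoidAlgebra k (latt v)))
      (fun x y h => ?_) p
    have := congrArg (fun f : AddMonoidAlgebra k (latt v) => f.coeff 0) h
    simpa [AddMonoidAlgebra.singleZeroRingHom] using this
  set q : ℕ := p ^ e with hqdef
  have hq0 : 0 < q := Nat.pow_pos hp.pos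
  have hqR : (0:ℝ) < (q:ℝ) := by exact_mod_cast hq0
  -- bracket ideal is a monomial ideal
  set qTB : Set (latt v) := {s : latt v | ∃ b : latt v, (b : Fin d → ℤ) ∈ B ∧ s = q • b}
    with hqTB
  have hbr : bracket (monIdeal k v B) q =
      Ideal.span {x : Toric k v | ∃ s ∈ qTB, x = AddMonoidAlgebra.single s 1} := by
    rw [monIdeal, hqdef, bracket_span p e]
    congr 1
    ext x
    constructor
    · rintro ⟨y, ⟨b, hb, rfl⟩, rfl⟩
      exact ⟨p ^ e • b, ⟨b, hb, rfl⟩, by simp [AddMonoidAlgebra.single_pow]⟩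
    · rintro ⟨s, ⟨b, hb, rfl⟩, rfl⟩
      exact ⟨AddMonoidAlgebra.single b 1, ⟨b, hb, rfl⟩,
        by simp [AddMonoidAlgebra.single_pow, hqdef]⟩
  -- the bracket is a proper ideal
  have hbrle : bracket (monIdeal k v B) q ≤ monIdeal k v B := by
    rw [bracket, Ideal.span_le]
    rintro _ ⟨x, hx, rfl⟩
    exact Ideal.pow_mem_of_mem _ hx q hq0
  have hbrne : bracket (monIdeal k v B) q ≠ ⊤ := fun h => hJP (top_unique (h ▸ hbrle))
  -- nuF belongs to the defining set
  set S : Set ℕ := {r : ℕ | ¬ (monIdeal k v A) ^ r ≤ bracket (monIdeal k v B) q} with hSdef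
  have h0S : (0:ℕ) ∈ S := by
    intro hle
    simp only [pow_zero, Ideal.one_eq_top, top_le_iff] at hle
    exact hbrne hle
  set ν : ℕ := nuF (monIdeal k v A) (monIdeal k v B) q with hνdef
  have hνS : ν ∈ S := by
    rw [hνdef, nuF]
    by_cases hb : BddAbove S
    · exact Nat.sSup_mem ⟨0, h0S⟩ hb
    · rw [show {r : ℕ | ¬ (monIdeal k v A) ^ r ≤ bracket (monIdeal k v B) q} = S from rfl,
        csSup_of_not_bddAbove hb, csSup_empty]
      exact h0S
  obtain ⟨f, hfmem, hfnot⟩ := SetLike.not_le_iff_exists.mp hνS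
  -- find a monomial of f outside the bracket
  have hex : ∃ c ∈ f.coeff.support,
      (AddMonoidAlgebra.single c 1 : Toric k v) ∉ bracket (monIdeal k v B) q := by
    by_contra h
    push_neg at h
    exact hfnot (mem_of_forall_single_mem h)
  obtain ⟨c, hcsup, hcnot⟩ := hex
  -- decompose c using membership in a^ν
  set Tν : Set (latt v) :=
    {s : latt v | ∃ g : Fin ν → latt v, (∀ i, ((g i : Fin d → ℤ)) ∈ A) ∧ s = ∑ i, g i}
    with hTν
  have hpow : (monIdeal k v A) ^ ν ≤
      Ideal.span {x : Toric k v | ∃ s ∈ Tν, x = AddMonoidAlgebra.single s 1} := by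
    rw [monIdeal, span_pow_eq]
    apply Ideal.span_le.mpr
    intro x hx
    obtain ⟨F, hF⟩ := Set.mem_pow.mp hx
    rw [List.prod_ofFn] at hF
    choose g hg hgeq using fun i => (F i).2
    apply SetLike.mem_coe.mpr
    apply Ideal.subset_span
    refine ⟨∑ i, g i, ⟨g, hg, rfl⟩, ?_⟩
    rw [← hF, Finset.prod_congr rfl (fun i _ => hgeq i), prod_single_one]
  obtain ⟨sν, ⟨g, hgA, rfl⟩, m, hcm⟩ := support_subset_of_mem_span (hpow hfmem) hcsup
  -- the candidate point u
  set u : Fin d → ℝ := (q : ℝ)⁻¹ • toR (c : Fin d → ℤ) with hu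
  have hudual : u ∈ dualCone v := dualCone_smul (by positivity) c.2
  refine ⟨u, ⟨hudual, ?_⟩, ?_⟩
  · -- u ∉ QSet v B
    intro huQ
    simp only [QSet, Set.mem_iUnion] at huQ
    obtain ⟨b, hbB, hub⟩ := huQ
    obtain ⟨w, hw, hwu⟩ := Set.mem_vadd_set.mp hub
    have hweq : w = u - toR b := by
      rw [← hwu]; show w = toR b + w - toR b; ring
    have hm'R : toR ((c : Fin d → ℤ) - q • b) = (q:ℝ) • w := by
      rw [toR_sub, toR_nsmul, hweq, hu, smul_sub, smul_smul,
        mul_inv_cancel₀ (ne_of_gt hqR), one_smul]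
    have hm'lat : ((c : Fin d → ℤ) - q • b) ∈ latt v := by
      show toR _ ∈ dualCone v
      rw [hm'R]
      exact dualCone_smul (by positivity) hw
    apply hcnot
    rw [hbr]
    have hceq : c = (⟨_, hm'lat⟩ : latt v) + q • (⟨b, hBl b hbB⟩ : latt v) := by
      apply Subtype.ext
      show (c : Fin d → ℤ) = ((c : Fin d → ℤ) - q • b) + q • b
      ring
    rw [hceq]
    exact single_mem_span (T := qTB) (s := q • (⟨b, hBl b hbB⟩ : latt v))
      ⟨⟨b, hBl b hbB⟩, hbB, rfl⟩ ⟨_, hm'lat⟩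
  · -- ν / q ≤ lam v A u
    have hcast : ((p : ℝ) ^ e) = (q : ℝ) := by rw [hqdef]; push_cast; ring
    rw [show (nuF (monIdeal k v A) (monIdeal k v B) (p ^ e) : ℝ) = (ν : ℝ) from rfl, hcast]
    rcases Nat.eq_zero_or_pos ν with hν0 | hνpos
    · rw [hν0]
      simp only [Nat.cast_zero, zero_div]
      exact Real.sSup_nonneg (fun l hl => hl.1.le)
    have hνR : (0:ℝ) < (ν:ℝ) := by exact_mod_cast hνpos
    -- bounded above
    set x₀ : Fin d → ℝ := ∑ j, toR (v j) with hx₀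
    have hx₀cone : x₀ ∈ cone v := sum_gen_mem_cone v
    have hpos : ∀ a ∈ A, 0 < pair (toR a) x₀ := by
      intro a haA
      rcases lt_or_eq_of_le ((hAl a haA) x₀ hx₀cone) with h | h
      · exact h
      exfalso
      have hsum : ∑ j, pair (toR a) (toR (v j)) = 0 := by
        rw [← pair_sum_right]; exact h.symm
      have hterm : ∀ j, pair (toR a) (toR (v j)) = 0 := by
        have := (Finset.sum_eq_zero_iff_of_nonneg
          (fun j _ => (hAl a haA) _ (gen_mem_cone v j))).mp hsum
        exact fun j => this j (Finset.mem_univ j)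
      have hneg : toR (-a) ∈ dualCone v := by
        intro x hxc
        obtain ⟨cc, hcc, rfl⟩ := hxc
        rw [toR_neg, pair_neg_left, pair_sum_right]
        have hz : ∀ j ∈ Finset.univ, pair (toR a) (cc j • toR (v j)) = 0 := fun j _ => by
          rw [pair_smul_right, hterm j, mul_zero]
        rw [Finset.sum_eq_zero hz]
        simp
      apply haP
      rw [Ideal.eq_top_iff_one]
      have h1 : (1 : Toric k v) =
          AddMonoidAlgebra.single ((⟨-a, hneg⟩ : latt v)) 1 *
            AddMonoidAlgebra.single ((⟨a, hAl a haA⟩ : latt v)) 1 := by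
        rw [AddMonoidAlgebra.single_mul_single, one_mul, AddMonoidAlgebra.one_def]
        congr 1
        apply Subtype.ext
        show (0 : Fin d → ℤ) = -a + a
        ring
      rw [h1, monIdeal]
      exact Ideal.mul_mem_left _ _ (Ideal.subset_span ⟨⟨a, hAl a haA⟩, haA, rfl⟩)
    set m0 : ℝ := A.inf' hAne (fun a => pair (toR a) x₀) with hm0def
    have hm0 : 0 < m0 := (Finset.lt_inf'_iff hAne).mpr hpos
    have hlin : IsLinearMap ℝ (fun w : Fin d → ℝ => pair w x₀) :=
      ⟨fun a b => pair_add_left a b x₀, fun r a => pair_smul_left r a x₀⟩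
    have hhull : convexHull ℝ (toR '' ↑A) ⊆ {w : Fin d → ℝ | m0 ≤ pair w x₀} := by
      apply convexHull_min
      · rintro _ ⟨a, haA, rfl⟩
        show m0 ≤ pair (toR a) x₀
        exact Finset.inf'_le _ haA
      · exact convex_halfSpace_ge hlin m0
    have hbdd : BddAbove {l : ℝ | 0 < l ∧ u ∈ l • newton v A} := by
      refine ⟨pair u x₀ / m0, fun l hl => ?_⟩
      obtain ⟨hl0, hlmem⟩ := hl
      obtain ⟨z, hz, hzu⟩ := Set.mem_smul_set.mp hlmem
      obtain ⟨x, hx, y, hy, rfl⟩ := Set.mem_add.mp hz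
      have hxge : m0 ≤ pair x x₀ := hhull hx
      have hyge : 0 ≤ pair y x₀ := hy x₀ hx₀cone
      have hpu : pair u x₀ = l * pair (x + y) x₀ := by rw [← hzu, pair_smul_left]
      rw [le_div_iff₀ hm0]
      calc l * m0 ≤ l * (pair x x₀ + pair y x₀) := by
            apply mul_le_mul_of_nonneg_left _ hl0.le
            linarith
        _ = pair u x₀ := by rw [hpu, pair_add_left]
    -- membership of ν/q in the set
    apply le_csSup hbdd
    refine ⟨by positivity, ?_⟩
    have hceq : toR (c : Fin d → ℤ) = toR ((∑ i, g i : latt v) : Fin d → ℤ) + toR (m : Fin d → ℤ) := by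
      rw [hcm]
      push_cast
      rw [toR_add]
      ring
    have hxmem : (ν:ℝ)⁻¹ • toR ((∑ i, g i : latt v) : Fin d → ℤ) ∈ convexHull ℝ (toR '' ↑A) := by
      apply mem_convexHull_of_exists_fintype (fun _ : Fin ν => (ν:ℝ)⁻¹)
        (fun i => toR ((g i : Fin d → ℤ)))
      · intro i; positivity
      · rw [Finset.sum_const, Finset.card_univ, Fintype.card_fin, nsmul_eq_mul]
        field_simp
      · intro i; exact ⟨(g i : Fin d → ℤ), hgA i, rfl⟩
      · rw [← Finset.smul_sum]
        congr 1
        push_cast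
        rw [toR_sum]
    have hymem : (ν:ℝ)⁻¹ • toR ((m : Fin d → ℤ)) ∈ dualCone v :=
      dualCone_smul (by positivity) m.2
    have hmem := Set.smul_mem_smul_set (a := (ν:ℝ)/(q:ℝ)) (Set.add_mem_add hxmem hymem)
    have hueq : u = ((ν:ℝ)/(q:ℝ)) •
        ((ν:ℝ)⁻¹ • toR ((∑ i, g i : latt v) : Fin d → ℤ) +
          (ν:ℝ)⁻¹ • toR ((m : Fin d → ℤ))) := by
      rw [← smul_add, smul_smul, ← hceq, hu]
      congr 1
      field_simp
    rw [hueq]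
    exact hmem

end Paper
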